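/- Let X ⊂ ℝ^D be finite, w : X → ℕ₊ a weight function, and C ⊆ X nonempty. Then for any ε > 0 there exists a multiset S of points of X (i.e., a function counting multiplicities) of size ⌈2/ε⌉ such that ‖μ_1(S) − μ_w(C)‖² ≤ ε · km(C, w)/w(C), where μ_w(C) = Σ_{x∈C} w(x)x / w(C), μ_1(S) is the unweighted mean of S, and km(C,w) = Σ_{x∈C} w(x)‖x − μ_w(C)‖². -/

import Mathlib

open scoped BigOperators
open scoped RealInnerProductSpace



lemma inaba_pow {α : Type*} [Fintype α] (f : α → ℝ) (n : ℕ) :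
    ∑ g : Fin n → α, ∏ i, f (g i) = (∑ x : α, f x) ^ n := by
  have h := Finset.prod_univ_sum (fun _ : Fin n => (Finset.univ : Finset α)) (fun _ x => f x)
  rw [Fintype.piFinset_univ] at h
  rw [← h, Finset.prod_const, Finset.card_univ, Fintype.card_fin]

lemma inaba_key {D : ℕ} (C : Finset (EuclideanSpace ℝ (Fin D)))
    (w : EuclideanSpace ℝ (Fin D) → ℕ) (μ : EuclideanSpace ℝ (Fin D))
    (h0 : ∑ x ∈ C, (w x : ℝ) • (x - μ) = 0) :
    ∀ n : ℕ,
      (∑ g : Fin n → {x // x ∈ C}, (∏ i, (w (g i : EuclideanSpace ℝ (Fin D)) : ℝ)) *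
          ‖∑ i, ((g i : EuclideanSpace ℝ (Fin D)) - μ)‖ ^ 2)
        * (∑ x ∈ C, (w x : ℝ))
      = n * (∑ x ∈ C, (w x : ℝ)) ^ n * (∑ x ∈ C, (w x : ℝ) * ‖x - μ‖ ^ 2) := by
  intro n
  induction n with
  | zero => simp
  | succ n ih =>
    set wC : ℝ := ∑ x ∈ C, (w x : ℝ) with hwC
    set km : ℝ := ∑ x ∈ C, (w x : ℝ) * ‖x - μ‖ ^ 2 with hkm
    have hwsub : ∑ x : {x // x ∈ C}, (w (x : EuclideanSpace ℝ (Fin D)) : ℝ) = wC := by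
      rw [hwC]; exact Finset.sum_coe_sort C (fun x => (w x : ℝ))
    have step : (∑ g : Fin (n+1) → {x // x ∈ C}, (∏ i, (w (g i : EuclideanSpace ℝ (Fin D)) : ℝ)) *
          ‖∑ i, ((g i : EuclideanSpace ℝ (Fin D)) - μ)‖ ^ 2)
        = wC * (∑ g : Fin n → {x // x ∈ C}, (∏ i, (w (g i : EuclideanSpace ℝ (Fin D)) : ℝ)) *
          ‖∑ i, ((g i : EuclideanSpace ℝ (Fin D)) - μ)‖ ^ 2) + km * wC ^ n := by
      rw [← Equiv.sum_comp (Fin.consEquiv (fun _ : Fin (n+1) => {x // x ∈ C}))]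
      rw [Fintype.sum_prod_type]
      have hterm : ∀ (x : {x // x ∈ C}) (g : Fin n → {x // x ∈ C}),
          (∏ i, (w (((Fin.consEquiv (fun _ : Fin (n+1) => {x // x ∈ C})) (x, g)) i : EuclideanSpace ℝ (Fin D)) : ℝ)) *
            ‖∑ i, ((((Fin.consEquiv (fun _ : Fin (n+1) => {x // x ∈ C})) (x, g)) i : EuclideanSpace ℝ (Fin D)) - μ)‖ ^ 2
          = ((w (x : EuclideanSpace ℝ (Fin D)) : ℝ) * ∏ i, (w (g i : EuclideanSpace ℝ (Fin D)) : ℝ)) *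
            ‖((x : EuclideanSpace ℝ (Fin D)) - μ) + ∑ i, ((g i : EuclideanSpace ℝ (Fin D)) - μ)‖ ^ 2 := by
        intro x g
        simp only [Fin.consEquiv_apply, Fin.prod_univ_succ,
          Fin.sum_univ_succ, Fin.cons_zero, Fin.cons_succ]
      simp only [hterm]
      rw [Finset.sum_comm]
      have inner_sum : ∀ g : Fin n → {x // x ∈ C},
          (∑ x : {x // x ∈ C}, ((w (x : EuclideanSpace ℝ (Fin D)) : ℝ) * ∏ i, (w (g i : EuclideanSpace ℝ (Fin D)) : ℝ)) *
            ‖((x : EuclideanSpace ℝ (Fin D)) - μ) + ∑ i, ((g i : EuclideanSpace ℝ (Fin D)) - μ)‖ ^ 2)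
          = (∏ i, (w (g i : EuclideanSpace ℝ (Fin D)) : ℝ)) * (wC * ‖∑ i, ((g i : EuclideanSpace ℝ (Fin D)) - μ)‖ ^ 2 + km) := by
        intro g
        set T : EuclideanSpace ℝ (Fin D) := ∑ i, ((g i : EuclideanSpace ℝ (Fin D)) - μ) with hT
        rw [Finset.sum_coe_sort C (fun x => ((w x : ℝ) * ∏ i, (w (g i : EuclideanSpace ℝ (Fin D)) : ℝ)) *
            ‖(x - μ) + T‖ ^ 2)]
        have step1 : ∑ x ∈ C, ((w x : ℝ) * ∏ i, (w (g i : EuclideanSpace ℝ (Fin D)) : ℝ)) * ‖(x - μ) + T‖ ^ 2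
            = (∏ i, (w (g i : EuclideanSpace ℝ (Fin D)) : ℝ)) * ∑ x ∈ C,
              ((w x : ℝ) * ‖x - μ‖ ^ 2 + 2 * ⟪(w x : ℝ) • (x - μ), T⟫ + (w x : ℝ) * ‖T‖ ^ 2) := by
          rw [Finset.mul_sum]
          refine Finset.sum_congr rfl fun x _ => ?_
          rw [norm_add_sq_real, real_inner_smul_left]
          ring
        rw [step1, Finset.sum_add_distrib, Finset.sum_add_distrib, ← Finset.sum_mul,
          ← Finset.mul_sum, ← sum_inner, h0]
        simp only [inner_zero_left, mul_zero, add_zero, ← hkm, ← hwC]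
        ring
      rw [Finset.sum_congr rfl (fun g _ => inner_sum g)]
      have step2 : ∀ g : Fin n → {x // x ∈ C},
          (∏ i, (w (g i : EuclideanSpace ℝ (Fin D)) : ℝ)) * (wC * ‖∑ i, ((g i : EuclideanSpace ℝ (Fin D)) - μ)‖ ^ 2 + km)
          = wC * ((∏ i, (w (g i : EuclideanSpace ℝ (Fin D)) : ℝ)) * ‖∑ i, ((g i : EuclideanSpace ℝ (Fin D)) - μ)‖ ^ 2)
            + (∏ i, (w (g i : EuclideanSpace ℝ (Fin D)) : ℝ)) * km := fun g => by ring
      rw [Finset.sum_congr rfl (fun g _ => step2 g), Finset.sum_add_distrib, ← Finset.mul_sum,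
        ← Finset.sum_mul,
        inaba_pow (fun x : {x // x ∈ C} => (w (x : EuclideanSpace ℝ (Fin D)) : ℝ)) n,
        hwsub, mul_comm (wC ^ n) km]
    rw [step, add_mul, mul_assoc, ih]
    push_cast
    ring
theorem inaba_derandomized {D : ℕ} (X : Finset (EuclideanSpace ℝ (Fin D)))
    (w : EuclideanSpace ℝ (Fin D) → ℕ) (hw : ∀ x ∈ X, 0 < w x)
    (C : Finset (EuclideanSpace ℝ (Fin D))) (hC : C ⊆ X) (hCne : C.Nonempty)
    (ε : ℝ) (hε : 0 < ε) :
    let wC : ℝ := ∑ x ∈ C, (w x : ℝ)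
    let μwC : EuclideanSpace ℝ (Fin D) := wC⁻¹ • ∑ x ∈ C, (w x : ℝ) • x
    let km : ℝ := ∑ x ∈ C, (w x : ℝ) * ‖x - μwC‖ ^ 2
    ∃ S : Multiset (EuclideanSpace ℝ (Fin D)),
      (∀ s ∈ S, s ∈ C) ∧ Multiset.card S = ⌈(2 : ℝ) / ε⌉₊ ∧
        ‖(Multiset.card S : ℝ)⁻¹ • S.sum - μwC‖ ^ 2 ≤ ε * (km / wC) := by
  intro wC μwC km
  have hwpos : ∀ x ∈ C, (0 : ℝ) < (w x : ℝ) := fun x hx =>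
    Nat.cast_pos.mpr (hw x (hC hx))
  have hwCpos : (0 : ℝ) < wC := Finset.sum_pos hwpos hCne
  have hkm0 : 0 ≤ km := Finset.sum_nonneg fun x hx =>
    mul_nonneg (le_of_lt (hwpos x hx)) (sq_nonneg _)
  have h0 : ∑ x ∈ C, (w x : ℝ) • (x - μwC) = 0 := by
    have : ∑ x ∈ C, (w x : ℝ) • (x - μwC)
        = (∑ x ∈ C, (w x : ℝ) • x) - wC • μwC := by
      simp only [smul_sub]
      rw [Finset.sum_sub_distrib, ← Finset.sum_smul]
    rw [this, smul_smul, mul_inv_cancel₀ hwCpos.ne', one_smul, sub_self]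
  set n : ℕ := ⌈(2 : ℝ) / ε⌉₊ with hn
  have hnpos : 0 < n := Nat.ceil_pos.mpr (div_pos two_pos hε)
  have hnR : (0 : ℝ) < (n : ℝ) := Nat.cast_pos.mpr hnpos
  have hn2 : 2 / ε ≤ (n : ℝ) := Nat.le_ceil _
  have key := inaba_key C w μwC h0 n
  have total : ∑ g : Fin n → {x // x ∈ C},
      (∏ i, (w (g i : EuclideanSpace ℝ (Fin D)) : ℝ)) = wC ^ n := by
    rw [inaba_pow (fun x : {x // x ∈ C} => (w (x : EuclideanSpace ℝ (Fin D)) : ℝ)) n]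
    rw [Finset.sum_coe_sort C (fun x => (w x : ℝ))]
  have hne : Nonempty {x // x ∈ C} := ⟨⟨hCne.choose, hCne.choose_spec⟩⟩
  -- there exists g with ‖T g‖² ≤ n * km / wC
  have hex : ∃ g : Fin n → {x // x ∈ C},
      ‖∑ i, ((g i : EuclideanSpace ℝ (Fin D)) - μwC)‖ ^ 2 ≤ (n : ℝ) * km / wC := by
    by_contra hcon
    push_neg at hcon
    have hlt : ∑ g : Fin n → {x // x ∈ C},
        (∏ i, (w (g i : EuclideanSpace ℝ (Fin D)) : ℝ)) * ((n : ℝ) * km / wC)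
        < ∑ g : Fin n → {x // x ∈ C},
        (∏ i, (w (g i : EuclideanSpace ℝ (Fin D)) : ℝ)) *
          ‖∑ i, ((g i : EuclideanSpace ℝ (Fin D)) - μwC)‖ ^ 2 := by
      refine Finset.sum_lt_sum_of_nonempty Finset.univ_nonempty fun g _ => ?_
      have hWpos : 0 < ∏ i, (w (g i : EuclideanSpace ℝ (Fin D)) : ℝ) :=
        Finset.prod_pos fun i _ => hwpos _ (g i).2
      exact mul_lt_mul_of_pos_left (hcon g) hWpos
    rw [← Finset.sum_mul, total] at hlt
    have heq : (∑ g : Fin n → {x // x ∈ C},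
        (∏ i, (w (g i : EuclideanSpace ℝ (Fin D)) : ℝ)) *
          ‖∑ i, ((g i : EuclideanSpace ℝ (Fin D)) - μwC)‖ ^ 2)
        = wC ^ n * ((n : ℝ) * km / wC) := by
      have := key
      field_simp at this ⊢
      linarith [this]
    rw [heq] at hlt
    exact lt_irrefl _ hlt
  obtain ⟨g, hg⟩ := hex
  refine ⟨Multiset.map (fun i => (g i : EuclideanSpace ℝ (Fin D))) Finset.univ.val,
    ?_, ?_, ?_⟩
  · intro s hs
    obtain ⟨i, _, rfl⟩ := Multiset.mem_map.mp hs
    exact (g i).2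
  · simp [hn]
  · have hcard : Multiset.card (Multiset.map (fun i => (g i : EuclideanSpace ℝ (Fin D)))
        Finset.univ.val) = n := by simp
    rw [hcard]
    have hsum : (Multiset.map (fun i => (g i : EuclideanSpace ℝ (Fin D)))
        Finset.univ.val).sum = ∑ i, (g i : EuclideanSpace ℝ (Fin D)) := rfl
    rw [hsum]
    have hT : (n : ℝ)⁻¹ • (∑ i, (g i : EuclideanSpace ℝ (Fin D))) - μwC
        = (n : ℝ)⁻¹ • ∑ i, ((g i : EuclideanSpace ℝ (Fin D)) - μwC) := by
      rw [Finset.sum_sub_distrib, Finset.sum_const, Finset.card_univ, Fintype.card_fin,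
        smul_sub]
      congr 1
      rw [← Nat.cast_smul_eq_nsmul ℝ, smul_smul, inv_mul_cancel₀ hnR.ne', one_smul]
    rw [hT, norm_smul]
    have habs : ‖(n : ℝ)⁻¹‖ = (n : ℝ)⁻¹ := by
      rw [Real.norm_eq_abs, abs_of_nonneg (inv_nonneg.mpr hnR.le)]
    rw [habs, mul_pow]
    have h1 : ((n : ℝ)⁻¹) ^ 2 * ‖∑ i, ((g i : EuclideanSpace ℝ (Fin D)) - μwC)‖ ^ 2
        ≤ ((n : ℝ)⁻¹) ^ 2 * ((n : ℝ) * km / wC) :=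
      mul_le_mul_of_nonneg_left hg (by positivity)
    have h2 : ((n : ℝ)⁻¹) ^ 2 * ((n : ℝ) * km / wC) = (n : ℝ)⁻¹ * (km / wC) := by
      field_simp
    have hinv : (n : ℝ)⁻¹ ≤ ε := by
      have h3 : (n : ℝ)⁻¹ ≤ (2 / ε)⁻¹ :=
        inv_anti₀ (div_pos two_pos hε) hn2
      rw [inv_div] at h3
      linarith
    have h4 : (n : ℝ)⁻¹ * (km / wC) ≤ ε * (km / wC) :=
      mul_le_mul_of_nonneg_right hinv (div_nonneg hkm0 hwCpos.le)
    linarith
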